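/- Let H be a complex Hilbert space with open unit ball 𝔹, let τ ∈ H with ‖τ‖ = 1, let y ∈ 𝔹, let U be a unitary operator on H with Uτ = M_y(τ), and set m = M_y ∘ U. Then for every k > 1 and every α > k there exists δ > 0 such that for all z ∈ Γ_k = {z ∈ Δ : |z − 1|/(1 − |z|) < k} with |z − 1| < δ, the point m(zτ) lies in the Koranyi region D_α(τ) = {x ∈ 𝔹 : |1 − ⟨x,τ⟩| < (α/2)(1 − ‖x‖²)}. -/

import Mathlib

open Metric

variable {H : Type*} [NormedAddCommGroup H] [InnerProductSpace ℂ H]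

/-- The inner ℂ product in the convention of the paper: `⟨x, y⟩` is linear in the
first argument and conjugate-linear in the second. -/
noncomputable def ip (x y : H) : ℂ := inner ℂ y x

/-- The orthogonal projection `P_y` of `H` onto the span of `y`:
`P_y x = (⟨x, y⟩ / ‖y‖²) y` (and `P_0 = 0`, which this formula also yields). -/
noncomputable def Pproj (y x : H) : H := (ip x y / (‖y‖ ^ 2 : ℂ)) • y

/-- `Q_y = I - P_y`. -/
noncomputable def Qproj (y x : H) : H := x - Pproj y x

/-- The Möbius transformation of the unit ball:
`M_y x = (y - P_y x - s Q_y x) / (1 - ⟨x, y⟩)`, where `s = √(1 - ‖y‖²)`. -/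
noncomputable def Mob (y x : H) : H :=
  (1 - ip x y)⁻¹ • (y - Pproj y x - (Real.sqrt (1 - ‖y‖ ^ 2) : ℂ) • Qproj y x)

/-- The Koranyi approach region
`D_α(τ) = {x ∈ 𝔹 : |1 - ⟨x, τ⟩| < (α/2)(1 - ‖x‖²)}` at a boundary point `τ`. -/
noncomputable def koranyiRegion (α : ℝ) (τ : H) : Set H :=
  {x : H | ‖x‖ < 1 ∧ ‖1 - ip x τ‖ < α / 2 * (1 - ‖x‖ ^ 2)}

set_option maxHeartbeats 2000000 in
lemma key (y x w : H) (hy : ‖y‖ < 1) (hx : ip x y ≠ 1) (hw : ip w y ≠ 1) :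
    (1 - ip x y) * (1 - ip y w) * (1 - ip (Mob y x) (Mob y w))
      = (1 - (‖y‖:ℂ) ^ 2) * (1 - ip x w) := by
  by_cases hy0 : y = 0
  · simp [hy0, Mob, ip, Pproj, Qproj, inner_smul_left, inner_smul_right]
  · have hT : ((‖y‖:ℂ)^2) ≠ 0 := by
      simpa using norm_ne_zero_iff.2 hy0
    have hs2 : ((Real.sqrt (1 - ‖y‖ ^ 2) : ℝ) : ℂ)^2 = 1 - (‖y‖:ℂ)^2 := by
      rw [← Complex.ofReal_pow, Real.sq_sqrt (by nlinarith [norm_nonneg y])]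
      push_cast; ring
    have hyy : (inner ℂ y y : ℂ) = (‖y‖:ℂ)^2 := by
      rw [inner_self_eq_norm_sq_to_K]; norm_cast
    have h1x : (1:ℂ) - inner ℂ y x ≠ 0 := by
      intro h; apply hx; simp only [ip]; linear_combination -h
    have h1w : (1:ℂ) - inner ℂ w y ≠ 0 := by
      intro h; apply hw
      have : (inner ℂ y w : ℂ) = 1 := by
        have := congrArg (starRingEnd ℂ) (by linear_combination -h : (inner ℂ w y : ℂ) = 1)
        simpa using this
      simpa [ip] using this
    simp only [Mob, ip, Pproj, Qproj]
    simp only [inner_sub_left, inner_sub_right, inner_smul_left, inner_smul_right, hyy,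
      map_div₀, map_sub, map_one, map_pow, inner_conj_symm, Complex.conj_conj, Complex.conj_ofReal, map_inv₀]
    generalize (inner ℂ y x : ℂ) = A at *
    generalize (inner ℂ w y : ℂ) = B at *
    generalize (inner ℂ w x : ℂ) = C at *
    generalize hs : ((Real.sqrt (1 - ‖y‖ ^ 2) :ℝ) : ℂ) = s at *
    generalize hty : ((‖y‖:ℂ))^2 = T at *
    have h2 : -(B * T) + T ≠ 0 := fun h => h1w (by
      rcases mul_eq_zero.1 (by linear_combination h : ((1:ℂ) - B) * T = 0) with h' | h'
      · exact h'
      · exact absurd h' hT)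
    rw [show B/T*T = B from div_mul_cancel₀ _ hT]
    have hsub : B - B = 0 := sub_self B
    rw [hsub, mul_zero, sub_zero]
    field_simp
    have hD : ((1 - A) * ((1 - B) * (T * (1 - B)) * ((1 - B) * T * (T * (1 - B))))) ≠ 0 := by
      apply_rules [mul_ne_zero]
    linear_combination (-(T*C - A*B)) * hs2

set_option maxHeartbeats 2000000 in
lemma mob_invol (y x : H) (hy : ‖y‖ < 1) (hx : ip x y ≠ 1) : Mob y (Mob y x) = x := by
  by_cases hy0 : y = 0
  · simp [hy0, Mob, ip, Pproj, Qproj]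
  · have hT : ((‖y‖:ℂ)^2) ≠ 0 := by
      simpa using norm_ne_zero_iff.2 hy0
    have hs2 : ((Real.sqrt (1 - ‖y‖ ^ 2) : ℝ) : ℂ)^2 = 1 - (‖y‖:ℂ)^2 := by
      rw [← Complex.ofReal_pow, Real.sq_sqrt (by nlinarith [norm_nonneg y])]
      push_cast; ring
    have hyy : (inner ℂ y y : ℂ) = (‖y‖:ℂ)^2 := by
      rw [inner_self_eq_norm_sq_to_K]; norm_cast
    have h1x : (1:ℂ) - inner ℂ y x ≠ 0 := by
      intro h; apply hx; simp only [ip]; linear_combination -h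
    have hT1 : (1:ℂ) - (‖y‖:ℂ)^2 ≠ 0 := by
      intro h
      have h2 : ((‖y‖^2 : ℝ) : ℂ) = ((1:ℝ) : ℂ) := by push_cast; linear_combination -h
      have := Complex.ofReal_injective h2
      nlinarith [norm_nonneg y]
    simp only [Mob, ip, Pproj, Qproj]
    simp only [inner_sub_left, inner_sub_right, inner_smul_left, inner_smul_right, hyy,
      map_div₀, map_sub, map_one, map_pow, inner_conj_symm, Complex.conj_conj,
      Complex.conj_ofReal, map_inv₀]
    match_scalars
    · generalize (inner ℂ y x : ℂ) = A at *
      generalize hs : ((Real.sqrt (1 - ‖y‖ ^ 2) :ℝ) : ℂ) = s at *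
      generalize hty : ((‖y‖:ℂ))^2 = T at *
      field_simp
      ring_nf
      rw [hs2]
      ring
    · generalize (inner ℂ y x : ℂ) = A at *
      generalize hs : ((Real.sqrt (1 - ‖y‖ ^ 2) :ℝ) : ℂ) = s at *
      generalize hty : ((‖y‖:ℂ))^2 = T at *
      field_simp
      ring_nf
      rw [hs2]
      field_simp

set_option maxHeartbeats 2000000 in
/-- with `m = M_y ∘ U` (`U` unitary, `U τ = M_y τ`), for every `k > 1`
and `α > k`, the point `m(zτ)` lies in the Koranyi region `D_α(τ)` whenever `z`
lies in the nontangential region `Γ_k = {z ∈ Δ : |z - 1|/(1 - |z|) < k}` and is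
close enough to `1`. -/
theorem image_of_stolz_in_koranyi (y τ : H) (hy : ‖y‖ < 1) (hτ : ‖τ‖ = 1)
    (U : H ≃ₗᵢ[ℂ] H) (hU : U τ = Mob y τ) :
    ∀ k : ℝ, 1 < k → ∀ α : ℝ, k < α → ∃ δ > 0, ∀ z : ℂ,
      ‖z‖ < 1 → ‖z - 1‖ < k * (1 - ‖z‖) →
      ‖z - 1‖ < δ →
      Mob y (U (z • τ)) ∈ koranyiRegion α τ := by
  intro k hk α hα
  have hT' : (0:ℝ) < 1 - ‖y‖^2 := by nlinarith [norm_nonneg y]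
  have habs : ∀ u : H, ‖ip u y‖ ≤ ‖y‖ * ‖u‖ := fun u => by
    rw [ip]; exact norm_inner_le_norm y u
  have hτy : ip τ y ≠ 1 := by
    intro h
    have := habs τ
    rw [h, hτ, mul_one] at this
    simp at this; linarith
  have hτyne : (1:ℂ) - ip τ y ≠ 0 := by
    intro h; exact hτy (by linear_combination -h)
  have hyτne : (1:ℂ) - ip y τ ≠ 0 := by
    intro h
    apply hτyne
    have h1 : (ip y τ : ℂ) = 1 := by linear_combination -h
    have h2 : (starRingEnd ℂ) (ip y τ) = 1 := by rw [h1]; simp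
    have h3 : ip τ y = (starRingEnd ℂ) (ip y τ) := by
      simp only [ip]; exact (inner_conj_symm (𝕜 := ℂ) y τ).symm
    rw [h3, h2]; ring
  have hτ2 : ip τ τ = 1 := by
    rw [ip, inner_self_eq_norm_sq_to_K, hτ]; norm_num
  set w : H := Mob y τ with hw_def
  have hww : ip w w = 1 := by
    have K0 := key y τ τ hy hτy hτy
    rw [hτ2, sub_self, mul_zero] at K0
    rcases mul_eq_zero.1 K0 with h | h
    · rcases mul_eq_zero.1 h with h' | h'
      · exact absurd h' hτyne
      · exact absurd h' hyτne
    · linear_combination -h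
  have hnw : ‖w‖ = 1 := by
    have h1 : ((‖w‖^2 : ℝ) : ℂ) = 1 := by
      rw [← hww]
      simp only [ip]
      rw [inner_self_eq_norm_sq_to_K]
      norm_cast
    have h2 : (‖w‖:ℝ)^2 = 1 := by exact_mod_cast h1
    nlinarith [norm_nonneg w]
  set b : ℂ := ip w y with hb_def
  have hb1 : ‖b‖ < 1 := by
    have := habs w; rw [hnw, mul_one] at this; exact lt_of_le_of_lt this hy
  have hwyne : ip w y ≠ 1 := by
    intro h; rw [← hb_def] at h; rw [h] at hb1; simp at hb1
  set c : ℝ := ‖1 - b‖ with hc_def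
  have hc : 0 < c := by
    rw [hc_def]
    rcases eq_or_ne (1 - b) 0 with h | h
    · exfalso
      have : b = 1 := by linear_combination -h
      rw [this] at hb1; simp at hb1
    · exact norm_pos_iff.mpr h
  have hα0 : (0:ℝ) < α := by linarith
  have hk0 : (0:ℝ) < k := by linarith
  have hkαc : (0:ℝ) < k + α * c := by positivity
  refine ⟨min 1 (c*(α-k)/(k+α*c)), lt_min one_pos (div_pos (mul_pos hc (by linarith)) hkαc), ?_⟩
  intro z hz1 hzk hzδ
  set r : ℝ := ‖z‖ with hr_def
  set d : ℝ := ‖z - 1‖ with hd_def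
  have hr0 : (0:ℝ) ≤ r := norm_nonneg _
  have hd1 : d < 1 := lt_of_lt_of_le hzδ (min_le_left _ _)
  have hd2 : d * (k + α*c) < c*(α-k) :=
    (lt_div_iff₀ hkαc).mp (lt_of_lt_of_le hzδ (min_le_right _ _))
  have hdpos : 0 < d := by
    rcases (norm_nonneg (z-1)).lt_or_eq with h | h
    · exact h
    · exfalso
      have hz : z = 1 := by
        have := norm_eq_zero.mp h.symm
        linear_combination this
      have : r = 1 := by rw [hr_def, hz]; simp
      linarith
  have hr1 : 1 - d ≤ r := by
    have h1 : (1:ℝ) = ‖z - (z - 1)‖ := by norm_num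
    have h2 : ‖z - (z-1)‖ ≤ ‖z‖ + ‖z-1‖ := by
      exact norm_sub_le _ _
    linarith [h1 ▸ h2]
  -- the point
  have hUz : U (z • τ) = z • w := by rw [map_smul, hU]
  have hwwi : (inner ℂ w w : ℂ) = 1 := hww
  have hxy : ip (z • w) y = z * b := by
    simp [ip, hb_def, inner_smul_right]
  have hzb : ‖z * b‖ < 1 := by
    rw [norm_mul]
    calc ‖z‖ * ‖b‖ ≤ 1 * ‖b‖ := by
          apply mul_le_mul_of_nonneg_right (le_of_lt hz1) (norm_nonneg _)
      _ = ‖b‖ := one_mul _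
      _ < 1 := hb1
  have hxyne : ip (z • w) y ≠ 1 := by
    intro h; rw [hxy] at h; rw [h] at hzb; simp at hzb
  have hxw : ip (z • w) w = z := by
    simp [ip, inner_smul_right, hwwi, hnw]
  have hyx : (1:ℂ) - ip y (z • w) = (starRingEnd ℂ) (1 - z*b) := by
    have : ip y (z • w) = (starRingEnd ℂ) (z * b) := by
      rw [ip, inner_smul_left, hb_def, ip, ← inner_conj_symm y w, map_mul]
      simp
    rw [this, map_sub, map_one]
  have hyw : (1:ℂ) - ip y w = (starRingEnd ℂ) (1 - b) := by
    have : ip y w = (starRingEnd ℂ) b := by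
      rw [ip, hb_def, ip, ← inner_conj_symm y w]
      simp
    rw [this, map_sub, map_one]
  set n : ℝ := ‖Mob y (z • w)‖ with hn_def
  have hMxMx : ip (Mob y (z • w)) (Mob y (z • w)) = ((n:ℂ))^2 := by
    rw [ip, inner_self_eq_norm_sq_to_K, hn_def]
    norm_cast
  have hnx : ‖z • w‖ = r := by
    rw [norm_smul, hnw, mul_one]
  have hxx : ip (z • w) (z • w) = ((r:ℂ))^2 := by
    rw [ip, inner_self_eq_norm_sq_to_K, hnx]
    norm_cast
  set m : ℝ := ‖1 - z*b‖ with hm_def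
  have hm : 0 < m := by
    rcases eq_or_ne (1 - z*b) 0 with h | h
    · exfalso
      have : z*b = 1 := by linear_combination -h
      rw [this] at hzb; simp at hzb
    · exact norm_pos_iff.mpr h
  -- K1, real form R1
  have K1 := key y (z • w) (z • w) hy hxyne hxyne
  rw [hxy, hMxMx, hxx] at K1
  have hmc : ((m:ℂ))^2 = (1 - z*b) * (starRingEnd ℂ) (1 - z*b) := by
    rw [Complex.mul_conj, hm_def]
    norm_cast
    rw [Complex.sq_norm]
  have R1 : m^2 * (1 - n^2) = (1 - ‖y‖^2) * (1 - r^2) := by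
    apply Complex.ofReal_injective
    push_cast
    calc ((m:ℂ))^2 * (1 - (n:ℂ)^2)
        = (1 - z*b) * ((1:ℂ) - ip y (z • w)) * (1 - (n:ℂ)^2) := by
          rw [hyx, ← hmc]
      _ = (1 - (‖y‖:ℂ)^2) * (1 - (r:ℂ)^2) := by
          linear_combination K1
  -- K2, real form R2
  have K2 := key y (z • w) w hy hxyne hwyne
  have hMw : Mob y w = τ := by rw [hw_def]; exact mob_invol y τ hy hτy
  rw [hxy, hxw, hMw] at K2
  set E : ℝ := ‖1 - ip (Mob y (z • w)) τ‖ with hE_def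
  have R2 : m * (c * E) = (1 - ‖y‖^2) * d := by
    have h := congrArg (‖·‖) K2
    simp only [norm_mul] at h
    have e1 : ‖(1:ℂ) - ip y w‖ = c := by
      rw [hyw, Complex.norm_conj, hc_def]
    have e2 : ‖(1:ℂ) - (‖y‖:ℂ)^2‖ = 1 - ‖y‖^2 := by
      have : ((1:ℂ) - (‖y‖:ℂ)^2) = ((1 - ‖y‖^2 : ℝ) : ℂ) := by push_cast; ring
      rw [this, Complex.norm_real, Real.norm_eq_abs, abs_of_pos hT']
    have e3 : ‖(1:ℂ) - z‖ = d := by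
      rw [hd_def, norm_sub_rev]
    rw [e1, e2, e3, ← hm_def, ← hE_def] at h
    linear_combination h
  -- key real inequality
  have p1 : 0 < k*(1-r) - d := by linarith
  have p2 : 0 ≤ r + d - 1 := by linarith
  have p3 : 0 < 2 - d := by linarith
  have p4 : 0 ≤ k*(1-r) := by nlinarith
  have S1 : d*(2-d) < k*((1-r)*(1+r)) := by
    nlinarith [mul_pos p1 p3, mul_nonneg p4 p2]
  have S2 : 2*k*(c+d) < α*c*(2-d) := by
    nlinarith [hd2, mul_nonneg (mul_nonneg hdpos.le hc.le) hα0.le]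
  have hmle : m ≤ c + d := by
    have h1 : (1:ℂ) - z*b = (1-b) + b*(1-z) := by ring
    have h2 : ‖(1-b) + b*(1-z)‖ ≤ ‖1-b‖ + ‖b*(1-z)‖ := by
      exact norm_add_le _ _
    have h3 : ‖b*(1-z)‖ ≤ d := by
      rw [norm_mul]
      have e3 : ‖(1:ℂ) - z‖ = d := by
        rw [hd_def, norm_sub_rev]
      rw [e3]
      nlinarith [norm_nonneg b, hb1, hdpos]
    rw [hm_def, h1]
    calc ‖(1-b) + b*(1-z)‖ ≤ ‖1-b‖ + ‖b*(1-z)‖ := h2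
      _ ≤ c + d := by rw [← hc_def]; linarith
  have hdm : d * m < α/2 * c * (1 - r^2) := by
    have S3 : 2*k*(d*m) ≤ 2*k*(d*(c+d)) := by
      nlinarith [mul_nonneg hdpos.le (sub_nonneg.mpr hmle)]
    have S4 := mul_lt_mul_of_pos_left S1 (mul_pos hα0 hc)
    have S5 := mul_lt_mul_of_pos_left S2 hdpos
    nlinarith [S3, S4, S5, hk0]
  -- conclude membership
  rw [hUz]
  constructor
  · show n < 1
    have hrr : 0 < 1 - r^2 := by nlinarith
    have hpos : 0 < m^2*(1-n^2) := by rw [R1]; exact mul_pos hT' hrr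
    have h1n : 0 < 1 - n^2 := by nlinarith [hpos, mul_pos hm hm]
    nlinarith [hn_def ▸ norm_nonneg (Mob y (z • w)), h1n]
  · show E < α / 2 * (1 - n^2)
    have h6 : m^2*(c*E) = m*((1 - ‖y‖^2)*d) := by
      have := congrArg (fun t => m * t) R2
      simpa [mul_assoc, pow_two] using this
    have h7 : (α/2*c) * (m^2*(1-n^2)) = (α/2*c)*((1 - ‖y‖^2)*(1-r^2)) := by rw [R1]
    have h8 := mul_lt_mul_of_pos_left hdm hT'
    have hmc2 : (0:ℝ) ≤ m^2*c := by positivity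
    have step : (m^2*c)*E < (m^2*c)*(α/2*(1-n^2)) := by
      calc (m^2*c)*E = m*((1 - ‖y‖^2)*d) := by linear_combination h6
        _ = (1 - ‖y‖^2)*(d*m) := by ring
        _ < (1 - ‖y‖^2)*(α/2*c*(1-r^2)) := h8
        _ = (α/2*c)*((1 - ‖y‖^2)*(1-r^2)) := by ring
        _ = (α/2*c)*(m^2*(1-n^2)) := by rw [R1]
        _ = (m^2*c)*(α/2*(1-n^2)) := by ring
    exact lt_of_mul_lt_mul_left step hmc2
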